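/- Let K be an algebraically closed field and g > 1 an integer with char(K) not dividing 2(2g+1). Let I, J ⊆ M(2g+1) be g-element subsets, b ∈ K, and λ1, λ2 nonzero elements of K such that λ1·Η_I(x) + (1/λ1)·Η_{∁I}(x) = λ2·Ψ_{J,b}(x) − (b/λ2)·Ψ_{∁J,b}(x) holds in K[x]. Let ε1, ε2 be distinct elements of I and ε3, ε4 distinct elements of ∁I, and set η_i = η(ε_i). Then [Η_{∁I}, Ψ_{J,b}]_{η1,η2} · [Η_I, Ψ_{∁J,b}]_{η3,η4} = [Ψ_{J,b}, Ψ_{∁J,b}]_{η1,η2} · [Ψ_{J,b}, Ψ_{∁J,b}]_{η3,η4} · b. -/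

import Mathlib

open Polynomial Finset

/-- `Mset K n` is the set of `n`-th roots of unity in `K` other than `1`. -/
noncomputable def Mset (K : Type*) [Field K] (n : ℕ) : Finset K :=
  open scoped Classical in
  (Polynomial.nthRootsFinset n (1 : K)).filter (· ≠ 1)

/-- `EtaP I = ∏_{ε ∈ I} (x - η(ε))` where `η(ε) = 1/(ε - 1)`. -/
noncomputable def EtaP {K : Type*} [Field K] (I : Finset K) : K[X] :=
  ∏ ε ∈ I, (X - C ((ε - 1)⁻¹))

/-- `PsiP I b = ∏_{ε ∈ I} (x + b·η(ε))` where `η(ε) = 1/(ε - 1)`. -/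
noncomputable def PsiP {K : Type*} [Field K] (I : Finset K) (b : K) : K[X] :=
  ∏ ε ∈ I, (X + C (b * (ε - 1)⁻¹))

/-- `[r, s]_{γ,δ} = r(γ)s(δ) - r(δ)s(γ)`. -/
noncomputable def brkt {K : Type*} [Field K] (r s : K[X]) (γ δ : K) : K :=
  r.eval γ * s.eval δ - r.eval δ * s.eval γ

lemma EtaP_eval_root {K : Type*} [Field K] {I : Finset K} {ε : K} (h : ε ∈ I) :
    (EtaP I).eval ((ε - 1)⁻¹) = 0 := by
  unfold EtaP
  rw [eval_prod]
  exact Finset.prod_eq_zero h (by simp)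

theorem stmt_15 (K : Type*) [Field K] [IsAlgClosed K] [DecidableEq K]
    (g : ℕ) (hg : 1 < g)
    (hchar : ((2 * (2 * g + 1) : ℕ) : K) ≠ 0)
    (I J : Finset K) (hI : I ⊆ Mset K (2 * g + 1)) (hJ : J ⊆ Mset K (2 * g + 1))
    (hIcard : I.card = g) (hJcard : J.card = g)
    (b : K) (l1 l2 : K) (hl1 : l1 ≠ 0) (hl2 : l2 ≠ 0)
    (heq : C l1 * EtaP I + C l1⁻¹ * EtaP (Mset K (2 * g + 1) \ I) =
      C l2 * PsiP J b - C (b * l2⁻¹) * PsiP (Mset K (2 * g + 1) \ J) b)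
    (ε1 ε2 ε3 ε4 : K) (h1 : ε1 ∈ I) (h2 : ε2 ∈ I) (h12 : ε1 ≠ ε2)
    (h3 : ε3 ∈ Mset K (2 * g + 1) \ I) (h4 : ε4 ∈ Mset K (2 * g + 1) \ I) (h34 : ε3 ≠ ε4)
    (η1 η2 η3 η4 : K)
    (hη1 : η1 = (ε1 - 1)⁻¹) (hη2 : η2 = (ε2 - 1)⁻¹)
    (hη3 : η3 = (ε3 - 1)⁻¹) (hη4 : η4 = (ε4 - 1)⁻¹) :
    brkt (EtaP (Mset K (2 * g + 1) \ I)) (PsiP J b) η1 η2 *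
      brkt (EtaP I) (PsiP (Mset K (2 * g + 1) \ J) b) η3 η4 =
    brkt (PsiP J b) (PsiP (Mset K (2 * g + 1) \ J) b) η1 η2 *
      brkt (PsiP J b) (PsiP (Mset K (2 * g + 1) \ J) b) η3 η4 * b := by
  have hA1 := congrArg (Polynomial.eval η1) heq
  have hA2 := congrArg (Polynomial.eval η2) heq
  have hA3 := congrArg (Polynomial.eval η3) heq
  have hA4 := congrArg (Polynomial.eval η4) heq
  simp only [eval_add, eval_sub, eval_mul, eval_C] at hA1 hA2 hA3 hA4
  rw [hη1, EtaP_eval_root h1] at hA1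
  rw [hη2, EtaP_eval_root h2] at hA2
  rw [hη3, EtaP_eval_root h3] at hA3
  rw [hη4, EtaP_eval_root h4] at hA4
  rw [← hη1] at hA1
  rw [← hη2] at hA2
  rw [← hη3] at hA3
  rw [← hη4] at hA4
  unfold brkt
  set e1' := (EtaP (Mset K (2 * g + 1) \ I)).eval η1
  set e2' := (EtaP (Mset K (2 * g + 1) \ I)).eval η2
  set e3 := (EtaP I).eval η3
  set e4 := (EtaP I).eval η4
  set p1 := (PsiP J b).eval η1
  set p2 := (PsiP J b).eval η2
  set p3 := (PsiP J b).eval η3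
  set p4 := (PsiP J b).eval η4
  set q1 := (PsiP (Mset K (2 * g + 1) \ J) b).eval η1
  set q2 := (PsiP (Mset K (2 * g + 1) \ J) b).eval η2
  set q3 := (PsiP (Mset K (2 * g + 1) \ J) b).eval η3
  set q4 := (PsiP (Mset K (2 * g + 1) \ J) b).eval η4
  have he1 : e1' = l1 * (l2 * p1 - b * l2⁻¹ * q1) := by
    rw [← hA1]; field_simp; ring
  have he2 : e2' = l1 * (l2 * p2 - b * l2⁻¹ * q2) := by
    rw [← hA2]; field_simp; ring
  have he3 : e3 = l1⁻¹ * (l2 * p3 - b * l2⁻¹ * q3) := by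
    rw [← hA3]; field_simp; ring
  have he4 : e4 = l1⁻¹ * (l2 * p4 - b * l2⁻¹ * q4) := by
    rw [← hA4]; field_simp; ring
  rw [he1, he2, he3, he4]
  field_simp
  ring
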